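/- Let d ≥ 3 and 1 ≤ k ≤ ⌈(d−2)/2⌉ be integers, let p be an IDF prime for (d,k), and let α, β be rational numbers. Then: (a) if f^n_{α,β}(0) = 0 for some integer n ≥ 1, then at least one of α, β is p-integral; (b) if f^m_{α,β}(1) = 1 for some integer m ≥ 1 and β is p-integral, then α is p-integral as well. -/

import Mathlib

open Finset Function

/-- The coefficient `b_i` of `z^(d-i)` in the normalized dynamical Belyi polynomial
`B_{d,k}`. -/
def belyiCoeff (d k i : ℕ) : ℚ :=
  ((-1 : ℚ) ^ (k - i) / ((k - i).factorial * i.factorial)) *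
    ∏ j ∈ (Finset.range (k + 1)).erase i, ((d : ℚ) - (j : ℚ))

/-- The normalized dynamical Belyi polynomial `B_{d,k}` as a function on `ℚ`. -/
def belyi (d k : ℕ) (z : ℚ) : ℚ :=
  ∑ i ∈ Finset.range (k + 1), belyiCoeff d k i * z ^ (d - i)

/-- The map `f_{a,c}(z) = a · B_{d,k}(z) + c`. -/
def belyiMap (d k : ℕ) (a c z : ℚ) : ℚ := a * belyi d k z + c

/-- `p` is an index divisor free (IDF) prime for the pair `(d,k)`:
`p` is a prime with `p > k`, `p ∣ d - r` for some `r ≤ k`, and `r ∤ v_p(d-r)`. -/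
def IsIDFPrime (d k p : ℕ) : Prop :=
  p.Prime ∧ k < p ∧ ∃ r ≤ k, p ∣ (d - r) ∧ ¬ (r ∣ padicValNat p (d - r))

/-- A rational number is `p`-integral if it is zero or has nonnegative `p`-adic valuation. -/
def PIntegral (p : ℕ) (x : ℚ) : Prop := x = 0 ∨ 0 ≤ padicValRat p x

lemma prod_range_sub_cast (i : ℕ) : ∏ j ∈ Finset.range i, ((i : ℚ) - j) = i.factorial := by
  have h := Finset.prod_range_reflect (fun j => ((j : ℚ) + 1)) i
  have h2 : ∀ j ∈ Finset.range i, ((i - 1 - j : ℕ) : ℚ) + 1 = (i : ℚ) - j := by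
    intro j hj
    simp only [Finset.mem_range] at hj
    have : (i - 1 - j) + 1 = i - j := by omega
    have h3 : ((i - j : ℕ) : ℚ) = (i : ℚ) - j := by
      have : j ≤ i := hj.le
      push_cast [this]; ring
    rw [← h3, ← this]; push_cast; ring
  calc ∏ j ∈ Finset.range i, ((i : ℚ) - j)
      = ∏ j ∈ Finset.range i, (((i - 1 - j : ℕ) : ℚ) + 1) := (Finset.prod_congr rfl h2).symm
    _ = ∏ j ∈ Finset.range i, ((j : ℚ) + 1) := h
    _ = ((∏ j ∈ Finset.range i, (j + 1) : ℕ) : ℚ) := by push_cast; rfl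
    _ = i.factorial := by rw [Finset.prod_range_add_one_eq_factorial]

lemma prod_erase_nodes (k i : ℕ) (hik : i ≤ k) :
    ∏ j ∈ (Finset.range (k + 1)).erase i, ((i : ℚ) - j)
      = (-1 : ℚ) ^ (k - i) * (k - i).factorial * i.factorial := by
  induction k, hik using Nat.le_induction with
  | base =>
    have h1 : (Finset.range (i + 1)).erase i = Finset.range i := by
      rw [Finset.range_add_one, Finset.erase_insert (by simp)]
    rw [h1, prod_range_sub_cast]
    simp
  | succ k hik ih =>
    have h1 : (Finset.range (k + 2)).erase i
        = insert (k + 1) ((Finset.range (k + 1)).erase i) := by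
      rw [Finset.range_add_one, Finset.erase_insert_of_ne (by omega)]
    rw [h1, Finset.prod_insert (by simp), ih]
    have h2 : ((i : ℚ) - ((k + 1 : ℕ) : ℚ)) = -(((k + 1 - i : ℕ) : ℚ)) := by
      push_cast [Nat.cast_sub (by omega : i ≤ k + 1)]; ring
    have h3 : k + 1 - i = (k - i) + 1 := by omega
    rw [h2, h3, Nat.factorial_succ, pow_succ]
    push_cast
    ring

lemma belyi_coeff_eq_eval_basis (d k i : ℕ) (hik : i ≤ k) :
    belyiCoeff d k i
      = Polynomial.eval (d : ℚ) (Lagrange.basis (Finset.range (k + 1)) (Nat.cast : ℕ → ℚ) i) := by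
  rw [Lagrange.basis, Polynomial.eval_prod]
  have h1 : ∀ j ∈ (Finset.range (k + 1)).erase i,
      Polynomial.eval (d : ℚ) (Lagrange.basisDivisor (i : ℚ) (j : ℚ))
        = ((i : ℚ) - j)⁻¹ * ((d : ℚ) - j) := by
    intro j hj
    simp [Lagrange.basisDivisor]
  rw [Finset.prod_congr rfl h1, Finset.prod_mul_distrib, Finset.prod_inv_distrib,
    prod_erase_nodes k i hik, belyiCoeff]
  congr 1
  rw [mul_inv, mul_inv, div_eq_mul_inv]
  have : ((-1 : ℚ) ^ (k - i))⁻¹ = (-1 : ℚ) ^ (k - i) := by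
    rcases Nat.even_or_odd (k - i) with h | h
    · rw [h.neg_one_pow]; norm_num
    · rw [h.neg_one_pow]; norm_num
  rw [this, mul_inv]
  ring

lemma belyi_one (d k : ℕ) : belyi d k 1 = 1 := by
  have hinj : Set.InjOn (Nat.cast : ℕ → ℚ) (Finset.range (k + 1)) :=
    Set.injOn_of_injective Nat.cast_injective
  have hs : (Finset.range (k + 1)).Nonempty := ⟨0, by simp⟩
  have := Lagrange.sum_basis hinj hs
  have h2 := congrArg (Polynomial.eval (d : ℚ)) this
  rw [Polynomial.eval_finset_sum, Polynomial.eval_one] at h2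
  rw [belyi]
  calc ∑ i ∈ Finset.range (k + 1), belyiCoeff d k i * (1 : ℚ) ^ (d - i)
      = ∑ i ∈ Finset.range (k + 1),
          Polynomial.eval (d : ℚ) (Lagrange.basis (Finset.range (k + 1)) (Nat.cast : ℕ → ℚ) i) := by
        refine Finset.sum_congr rfl fun i hi => ?_
        rw [one_pow, mul_one,
          belyi_coeff_eq_eval_basis d k i (Nat.lt_succ_iff.mp (Finset.mem_range.mp hi))]
    _ = 1 := h2

section padic
variable {p : ℕ} [hp : Fact p.Prime]

lemma padicValRat_prod {ι : Type*} (s : Finset ι) (f : ι → ℚ) (hf : ∀ i ∈ s, f i ≠ 0) :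
    padicValRat p (∏ i ∈ s, f i) = ∑ i ∈ s, padicValRat p (f i) := by
  induction s using Finset.cons_induction with
  | empty => simp
  | cons a s ha ih =>
    rw [Finset.prod_cons, Finset.sum_cons,
      padicValRat.mul (hf a (Finset.mem_cons_self a s))
        (Finset.prod_ne_zero_iff.mpr fun i hi => hf i (Finset.mem_cons_of_mem hi)),
      ih (fun i hi => hf i (Finset.mem_cons_of_mem hi))]

lemma val_add_of_lt' {q r : ℚ} (hq : q ≠ 0) (hr : r ≠ 0)
    (h : padicValRat p q < padicValRat p r) :
    q + r ≠ 0 ∧ padicValRat p (q + r) = padicValRat p q := by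
  have hne : q + r ≠ 0 := by
    intro h0
    rw [eq_neg_of_add_eq_zero_left h0, padicValRat.neg] at h
    exact lt_irrefl _ h
  exact ⟨hne, padicValRat.add_eq_of_lt hne hq hr h⟩

lemma sum_val_gt {ι : Type*} (s : Finset ι) (f : ι → ℚ) (c : ℤ)
    (h : ∀ i ∈ s, f i ≠ 0 ∧ c < padicValRat p (f i)) :
    (∑ i ∈ s, f i) = 0 ∨ ((∑ i ∈ s, f i) ≠ 0 ∧ c < padicValRat p (∑ i ∈ s, f i)) := by
  induction s using Finset.cons_induction with
  | empty => left; simp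
  | cons a s ha ih =>
    rw [Finset.sum_cons]
    rcases ih (fun i hi => h i (Finset.mem_cons_of_mem hi)) with h0 | ⟨hne, hlt⟩
    · rw [h0, add_zero]
      right; exact h a (Finset.mem_cons_self a s)
    · by_cases hz : f a + ∑ i ∈ s, f i = 0
      · left; exact hz
      · right
        exact ⟨hz, lt_of_lt_of_le (lt_min (h a (Finset.mem_cons_self a s)).2 hlt)
          (padicValRat.min_le_padicValRat_add hz)⟩

lemma dominant_sum {ι : Type*} [DecidableEq ι] (s : Finset ι) (f : ι → ℚ) (i₀ : ι) (hi₀ : i₀ ∈ s)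
    (hne : ∀ i ∈ s, f i ≠ 0)
    (hdom : ∀ i ∈ s, i ≠ i₀ → padicValRat p (f i₀) < padicValRat p (f i)) :
    (∑ i ∈ s, f i) ≠ 0 ∧ padicValRat p (∑ i ∈ s, f i) = padicValRat p (f i₀) := by
  rw [← Finset.add_sum_erase s f hi₀]
  rcases sum_val_gt (s.erase i₀) f (padicValRat p (f i₀))
      (fun i hi => ⟨hne i (Finset.mem_of_mem_erase hi),
        hdom i (Finset.mem_of_mem_erase hi) (Finset.ne_of_mem_erase hi)⟩) with h0 | ⟨hTne, hTlt⟩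
  · rw [h0, add_zero]
    exact ⟨hne i₀ hi₀, rfl⟩
  · exact val_add_of_lt' (hne i₀ hi₀) hTne hTlt

end padic

lemma not_dvd_sub {d k p r : ℕ} (hkd : k < d) (hkp : k < p) (hrk : r ≤ k) (hpdvd : p ∣ d - r)
    {j : ℕ} (hjk : j ≤ k) (hjr : j ≠ r) : ¬ p ∣ (d - j) := by
  intro hj
  rcases le_or_gt j r with h | h
  · have h1 : p ∣ (d - j) - (d - r) := Nat.dvd_sub hj hpdvd
    have h2 : (d - j) - (d - r) = r - j := by omega
    rw [h2] at h1
    have := Nat.le_of_dvd (by omega) h1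
    omega
  · have h1 : p ∣ (d - r) - (d - j) := Nat.dvd_sub hpdvd hj
    have h2 : (d - r) - (d - j) = j - r := by omega
    rw [h2] at h1
    have := Nat.le_of_dvd (by omega) h1
    omega

lemma belyiCoeff_val {d k p r : ℕ} [hp : Fact p.Prime] (hkd : k < d) (hkp : k < p) (hrk : r ≤ k)
    (hpdvd : p ∣ d - r) {i : ℕ} (hik : i ≤ k) :
    belyiCoeff d k i ≠ 0 ∧
    padicValRat p (belyiCoeff d k i)
      = if i = r then 0 else (padicValNat p (d - r) : ℤ) := by
  have hfac : ((k - i).factorial * i.factorial : ℚ) ≠ 0 := by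
    positivity
  have hu : ((-1 : ℚ) ^ (k - i) / ((k - i).factorial * i.factorial)) ≠ 0 := by
    apply div_ne_zero _ hfac
    apply pow_ne_zero
    norm_num
  have hfactor : ∀ j ∈ (Finset.range (k + 1)).erase i, ((d : ℚ) - j) ≠ 0 := by
    intro j hj
    have hjk : j ≤ k := Nat.lt_succ_iff.mp (Finset.mem_range.mp (Finset.mem_of_mem_erase hj))
    have : (j : ℚ) < d := by exact_mod_cast lt_of_le_of_lt hjk hkd
    linarith
  have hprodne : (∏ j ∈ (Finset.range (k + 1)).erase i, ((d : ℚ) - j)) ≠ 0 :=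
    Finset.prod_ne_zero_iff.mpr hfactor
  constructor
  · exact mul_ne_zero hu hprodne
  · rw [belyiCoeff, padicValRat.mul hu hprodne]
    have hvu : padicValRat p ((-1 : ℚ) ^ (k - i) / ((k - i).factorial * i.factorial)) = 0 := by
      rw [padicValRat.div (pow_ne_zero _ (by norm_num)) hfac,
        padicValRat.pow (-1 : ℚ), padicValRat.neg, padicValRat.one]
      have h1 : (((k - i).factorial * i.factorial : ℕ) : ℚ)
          = ((k - i).factorial * i.factorial : ℚ) := by push_cast; ring
      rw [← h1, padicValRat.of_nat]
      have : padicValNat p ((k - i).factorial * i.factorial) = 0 := by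
        apply padicValNat.eq_zero_of_not_dvd
        intro hdvd
        rcases (Nat.Prime.dvd_mul hp.out).mp hdvd with h | h
        · exact absurd ((Nat.Prime.dvd_factorial hp.out).mp h) (by omega)
        · exact absurd ((Nat.Prime.dvd_factorial hp.out).mp h) (by omega)
      rw [this]
      simp
    rw [hvu, zero_add]
    have hcast : ∀ j ∈ (Finset.range (k + 1)).erase i, ((d : ℚ) - j) = ((d - j : ℕ) : ℚ) := by
      intro j hj
      have hjk : j ≤ k := Nat.lt_succ_iff.mp (Finset.mem_range.mp (Finset.mem_of_mem_erase hj))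
      have : j ≤ d := by omega
      push_cast [this]
      ring
    rw [Finset.prod_congr rfl hcast, padicValRat_prod _ _ (fun j hj => by
      rw [← hcast j hj]; exact hfactor j hj)]
    have hterm : ∀ j ∈ (Finset.range (k + 1)).erase i,
        padicValRat p ((d - j : ℕ) : ℚ) = if j = r then (padicValNat p (d - r) : ℤ) else 0 := by
      intro j hj
      have hjk : j ≤ k := Nat.lt_succ_iff.mp (Finset.mem_range.mp (Finset.mem_of_mem_erase hj))
      rw [padicValRat.of_nat]
      by_cases hjr : j = r
      · rw [if_pos hjr, hjr]
      · rw [if_neg hjr, padicValNat.eq_zero_of_not_dvd (not_dvd_sub hkd hkp hrk hpdvd hjk hjr)]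
        simp
    rw [Finset.sum_congr rfl hterm]
    by_cases hir : i = r
    · rw [if_pos hir]
      apply Finset.sum_eq_zero
      intro j hj
      rw [if_neg]
      intro hjr
      exact (Finset.ne_of_mem_erase hj) (hjr.trans hir.symm)
    · rw [if_neg hir, Finset.sum_eq_single_of_mem r
        (Finset.mem_erase.mpr ⟨fun h => hir (h.symm), Finset.mem_range.mpr (by omega)⟩)
        (fun j _ hjr => by rw [if_neg hjr]), if_pos rfl]

lemma belyi_val {d k p r : ℕ} [hp : Fact p.Prime] (hkd : k + 2 ≤ d) (hk1 : 1 ≤ k) (hkp : k < p)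
    (hrk : r ≤ k) (hpdvd : p ∣ d - r) (hndvd : ¬ (r ∣ padicValNat p (d - r)))
    {z : ℚ} (hz : z ≠ 0) (hV : padicValRat p z ≤ -1) :
    belyi d k z ≠ 0 ∧ padicValRat p (belyi d k z) ≤ 2 * padicValRat p z := by
  set V := padicValRat p z with hVdef
  set E := (padicValNat p (d - r) : ℤ) with hEdef
  have hE1 : 1 ≤ E := by
    have h := one_le_padicValNat_of_dvd (by omega : d - r ≠ 0) hpdvd
    rw [hEdef]
    exact_mod_cast h
  have hcoeff : ∀ i ≤ k, belyiCoeff d k i ≠ 0 ∧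
      padicValRat p (belyiCoeff d k i) = if i = r then 0 else E :=
    fun i hik => belyiCoeff_val (by omega) hkp hrk hpdvd hik
  have htne : ∀ i ∈ Finset.range (k + 1), belyiCoeff d k i * z ^ (d - i) ≠ 0 := fun i hi =>
    mul_ne_zero (hcoeff i (Nat.lt_succ_iff.mp (Finset.mem_range.mp hi))).1 (pow_ne_zero _ hz)
  have hvt : ∀ i ≤ k, padicValRat p (belyiCoeff d k i * z ^ (d - i))
      = (if i = r then 0 else E) + ((d : ℤ) - i) * V := by
    intro i hik
    rw [padicValRat.mul (hcoeff i hik).1 (pow_ne_zero _ hz), padicValRat.pow z,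
      (hcoeff i hik).2]
    congr 1
    have : ((d - i : ℕ) : ℤ) = (d : ℤ) - i := by omega
    rw [this]
  have hrbound : ((d : ℤ) - r) * V ≤ 2 * V := by
    nlinarith [hV, (show (r : ℤ) + 2 ≤ d by exact_mod_cast (by omega : r + 2 ≤ d))]
  rcases lt_trichotomy (E + d * V) (((d : ℤ) - r) * V) with hlt | heq | hgt
  · -- dominant term is i = 0 (and r ≠ 0 in this case)
    have hr0 : r ≠ 0 := by
      rintro rfl
      push_cast at hlt
      linarith
    have hdom : ∀ i ∈ Finset.range (k + 1), i ≠ 0 →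
        padicValRat p (belyiCoeff d k 0 * z ^ (d - 0))
          < padicValRat p (belyiCoeff d k i * z ^ (d - i)) := by
      intro i hi hi0
      have hik : i ≤ k := Nat.lt_succ_iff.mp (Finset.mem_range.mp hi)
      rw [hvt 0 (by omega), hvt i hik, if_neg (Ne.symm hr0)]
      by_cases hir : i = r
      · rw [if_pos hir, hir]
        push_cast
        linarith
      · rw [if_neg hir]
        have hi1 : (1 : ℤ) ≤ i := by exact_mod_cast Nat.one_le_iff_ne_zero.mpr hi0
        push_cast
        nlinarith [hV]
    obtain ⟨hBne, hBval⟩ := dominant_sum (Finset.range (k + 1)) _ 0 (by simp) htne hdom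
    rw [show belyi d k z = ∑ i ∈ Finset.range (k + 1), belyiCoeff d k i * z ^ (d - i) from rfl]
    refine ⟨hBne, ?_⟩
    rw [hBval, hvt 0 (by omega), if_neg (Ne.symm hr0)]
    push_cast
    linarith
  · -- impossible: would give r ∣ E
    exfalso
    have hr0 : r ≠ 0 := by
      rintro rfl
      push_cast at heq
      linarith
    have : (r : ℤ) ∣ E := ⟨-V, by linarith⟩
    rw [hEdef] at this
    exact hndvd (by exact_mod_cast this)
  · -- dominant term is i = r
    have hdom : ∀ i ∈ Finset.range (k + 1), i ≠ r →
        padicValRat p (belyiCoeff d k r * z ^ (d - r))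
          < padicValRat p (belyiCoeff d k i * z ^ (d - i)) := by
      intro i hi hir
      have hik : i ≤ k := Nat.lt_succ_iff.mp (Finset.mem_range.mp hi)
      rw [hvt r hrk, hvt i hik, if_pos rfl, if_neg hir, zero_add]
      have hi0 : (0 : ℤ) ≤ i := by positivity
      nlinarith [hV, hgt]
    obtain ⟨hBne, hBval⟩ := dominant_sum (Finset.range (k + 1)) _ r
      (Finset.mem_range.mpr (by omega)) htne hdom
    rw [show belyi d k z = ∑ i ∈ Finset.range (k + 1), belyiCoeff d k i * z ^ (d - i) from rfl]
    refine ⟨hBne, ?_⟩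
    rw [hBval, hvt r hrk, if_pos rfl, zero_add]
    exact hrbound

lemma belyi_zero {d k : ℕ} (hkd : k < d) : belyi d k 0 = 0 := by
  rw [show belyi d k 0 = ∑ i ∈ Finset.range (k + 1), belyiCoeff d k i * (0:ℚ) ^ (d - i) from rfl]
  apply Finset.sum_eq_zero
  intro i hi
  have hik : i ≤ k := Nat.lt_succ_iff.mp (Finset.mem_range.mp hi)
  rw [zero_pow (by omega : d - i ≠ 0), mul_zero]

theorem pIntegral_of_periodic_critical_point' (d k p : ℕ) (hd : 3 ≤ d) (hk1 : 1 ≤ k)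
    (hk2 : k ≤ (d - 1) / 2) (hp : Nat.Prime p ∧ k < p ∧ ∃ r ≤ k, p ∣ (d - r) ∧ ¬ (r ∣ padicValNat p (d - r)))
    (α β : ℚ) :
    ((∃ n : ℕ, 1 ≤ n ∧ (belyiMap d k α β)^[n] 0 = 0) →
      (α = 0 ∨ 0 ≤ padicValRat p α) ∨ (β = 0 ∨ 0 ≤ padicValRat p β)) ∧
    ((∃ m : ℕ, 1 ≤ m ∧ (belyiMap d k α β)^[m] 1 = 1) →
      (β = 0 ∨ 0 ≤ padicValRat p β) → (α = 0 ∨ 0 ≤ padicValRat p α)) := by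
  obtain ⟨hpp, hkp, r, hrk, hpdvd, hndvd⟩ := hp
  haveI : Fact p.Prime := ⟨hpp⟩
  have hkd : k + 2 ≤ d := by
    have := (Nat.le_div_iff_mul_le (by norm_num)).mp hk2
    omega
  set g := belyiMap d k α β with hg
  have hgapp : ∀ z : ℚ, g z = α * belyi d k z + β := fun z => rfl
  constructor
  · rintro ⟨n, hn1, hfix⟩
    by_contra hcon
    push_neg at hcon
    obtain ⟨⟨hα0, hαv⟩, hβ0, hβv⟩ := hcon
    have hα1 : padicValRat p α ≤ -1 := by omega
    have hβ1 : padicValRat p β ≤ -1 := by omega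
    have key : ∀ m, 1 ≤ m → g^[m] 0 ≠ 0 ∧ padicValRat p (g^[m] 0) ≤ padicValRat p β := by
      intro m hm
      induction m with
      | zero => omega
      | succ m ih =>
        by_cases hm0 : m = 0
        · subst hm0
          rw [Function.iterate_one, hgapp, belyi_zero (by omega), mul_zero, zero_add]
          exact ⟨hβ0, le_refl _⟩
        · obtain ⟨hz, hvz⟩ := ih (by omega)
          rw [Function.iterate_succ_apply', hgapp]
          set z := g^[m] 0
          have hvz1 : padicValRat p z ≤ -1 := le_trans hvz hβ1
          obtain ⟨hBne, hBv⟩ := belyi_val hkd hk1 hkp hrk hpdvd hndvd hz hvz1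
          have hprodne : α * belyi d k z ≠ 0 := mul_ne_zero hα0 hBne
          have hprodv : padicValRat p (α * belyi d k z)
              = padicValRat p α + padicValRat p (belyi d k z) := padicValRat.mul hα0 hBne
          have hlt : padicValRat p (α * belyi d k z) < padicValRat p β := by
            rw [hprodv]; linarith
          obtain ⟨hsne, hsval⟩ := val_add_of_lt' hprodne hβ0 hlt
          refine ⟨hsne, ?_⟩
          rw [hsval, hprodv]
          linarith
    exact (key n hn1).1 hfix
  · rintro ⟨m, hm1, hfix⟩ hβint
    by_contra hA
    push_neg at hA
    obtain ⟨hα0, hαv⟩ := hA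
    have hα1 : padicValRat p α ≤ -1 := by omega
    have key : ∀ m, 1 ≤ m → g^[m] 1 ≠ 0 ∧ padicValRat p (g^[m] 1) ≤ padicValRat p α := by
      intro m hm
      induction m with
      | zero => omega
      | succ m ih =>
        by_cases hm0 : m = 0
        · subst hm0
          rw [Function.iterate_one, hgapp, belyi_one, mul_one]
          by_cases hβ0 : β = 0
          · rw [hβ0, add_zero]; exact ⟨hα0, le_refl _⟩
          · have hβv : 0 ≤ padicValRat p β := by
              rcases hβint with h | h
              · exact absurd h hβ0
              · exact h
            obtain ⟨hsne, hsval⟩ := val_add_of_lt' hα0 hβ0 (by linarith)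
            exact ⟨hsne, le_of_eq hsval⟩
        · obtain ⟨hz, hvz⟩ := ih (by omega)
          rw [Function.iterate_succ_apply', hgapp]
          set z := g^[m] 1
          have hvz1 : padicValRat p z ≤ -1 := le_trans hvz hα1
          obtain ⟨hBne, hBv⟩ := belyi_val hkd hk1 hkp hrk hpdvd hndvd hz hvz1
          have hprodne : α * belyi d k z ≠ 0 := mul_ne_zero hα0 hBne
          have hprodv : padicValRat p (α * belyi d k z)
              = padicValRat p α + padicValRat p (belyi d k z) := padicValRat.mul hα0 hBne
          have hple : padicValRat p (α * belyi d k z) ≤ padicValRat p α - 2 := by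
            rw [hprodv]; linarith
          by_cases hβ0 : β = 0
          · rw [hβ0, add_zero]
            exact ⟨hprodne, by linarith⟩
          · have hβv : 0 ≤ padicValRat p β := by
              rcases hβint with h | h
              · exact absurd h hβ0
              · exact h
            obtain ⟨hsne, hsval⟩ := val_add_of_lt' hprodne hβ0 (by linarith)
            refine ⟨hsne, ?_⟩
            rw [hsval]
            linarith
    have h1 := (key m hm1).2
    rw [hfix, padicValRat.one] at h1
    omega

/-- If `0` is periodic then at least one of `α, β` is `p`-integral; if
`1` is periodic and `β` is `p`-integral, then so is `α`. -/
theorem pIntegral_of_periodic_critical_point (d k p : ℕ) (hd : 3 ≤ d) (hk1 : 1 ≤ k)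
    (hk2 : k ≤ (d - 1) / 2) (hp : IsIDFPrime d k p) (α β : ℚ) :
    ((∃ n : ℕ, 1 ≤ n ∧ (belyiMap d k α β)^[n] 0 = 0) →
      PIntegral p α ∨ PIntegral p β) ∧
    ((∃ m : ℕ, 1 ≤ m ∧ (belyiMap d k α β)^[m] 1 = 1) →
      PIntegral p β → PIntegral p α) := by
  exact pIntegral_of_periodic_critical_point' d k p hd hk1 hk2 hp α β
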